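/- arXiv:1410.5300 — 8 statements merged into one kernel-verified Lean document; each statement's English description precedes it below -/
import Mathlib

section
/- For all integers n ≥ 0 and k ≥ 1, every sequence of real numbers ᾱ = (α₀, α₁, …, α_{n−1}) and all nonzero real numbers ℓ₁, …, ℓ_k, the multiparameter poly-Cauchy numbers of the first kind satisfy C_{n,L}^{(k)}(ᾱ) = Σ_{m=0}^{n} s_ᾱ(n,m) (ℓ₁ℓ₂⋯ℓ_k)^{m+1} / (m+1)^k. -/
open Finset

/-- Iterated integral ∫₀^{ℓ₁}⋯∫₀^{ℓ_k} f(x₁x₂⋯x_k) dx₁⋯dx_k over the list of bounds. -/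
noncomputable def iterInt : List ℝ → (ℝ → ℝ) → ℝ
  | [], f => f 1
  | l :: ls, f => ∫ x in (0:ℝ)..l, iterInt ls (fun y => f (x * y))

lemma iterInt_poly (ls : List ℝ) (N : ℕ) (s : ℕ → ℝ) :
    iterInt ls (fun t => ∑ m ∈ range N, s m * t ^ m) =
      ∑ m ∈ range N, s m * ls.prod ^ (m + 1) / ((m : ℝ) + 1) ^ ls.length := by
  induction ls generalizing s with
  | nil => simp [iterInt]
  | cons l ls ih =>
    show (∫ x in (0:ℝ)..l, iterInt ls fun y => ∑ m ∈ range N, s m * (x * y) ^ m) = _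
    have h1 : ∀ x : ℝ, (iterInt ls fun y => ∑ m ∈ range N, s m * (x * y) ^ m)
        = ∑ m ∈ range N, (s m * x ^ m) * ls.prod ^ (m + 1) / ((m : ℝ) + 1) ^ ls.length := by
      intro x
      have h2 : (fun y : ℝ => ∑ m ∈ range N, s m * (x * y) ^ m)
          = fun t : ℝ => ∑ m ∈ range N, (s m * x ^ m) * t ^ m := by
        funext y; apply Finset.sum_congr rfl; intro m _; ring
      rw [h2, ih]
    simp only [h1]
    rw [intervalIntegral.integral_finset_sum]
    · apply Finset.sum_congr rfl
      intro m _
      have : (∫ x in (0:ℝ)..l, s m * x ^ m * ls.prod ^ (m + 1) / ((m : ℝ) + 1) ^ ls.length)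
          = (s m * ls.prod ^ (m + 1) / ((m : ℝ) + 1) ^ ls.length) * ∫ x in (0:ℝ)..l, x ^ m := by
        rw [← intervalIntegral.integral_const_mul]
        apply intervalIntegral.integral_congr
        intro x _; ring
      rw [this, integral_pow]
      have hm : ((m : ℝ) + 1) ≠ 0 := by positivity
      simp only [List.prod_cons, List.length_cons, pow_succ]
      field_simp
      ring
    · intro m _
      apply Continuous.intervalIntegrable
      continuity

theorem stmt0 (n k : ℕ) (hk : 1 ≤ k) (α : ℕ → ℝ) (L : Fin k → ℝ)
    (hL : ∀ i, L i ≠ 0) (s : ℕ → ℝ)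
    (hs : ∀ x : ℝ, ∏ i ∈ range n, (x - α i) = ∑ m ∈ range (n + 1), s m * x ^ m) :
    iterInt (List.ofFn L) (fun t => ∏ i ∈ range n, (t - α i)) =
      ∑ m ∈ range (n + 1), s m * (∏ i, L i) ^ (m + 1) / ((m : ℝ) + 1) ^ k := by
  have hf : (fun t : ℝ => ∏ i ∈ range n, (t - α i))
      = fun t : ℝ => ∑ m ∈ range (n + 1), s m * t ^ m := funext hs
  rw [hf, iterInt_poly]
  simp [List.prod_ofFn]
end

section
/- For every integer n ≥ 0, every sequence of real numbers ᾱ = (α₀, α₁, …, α_{n−1}) and every nonzero real number ℓ, the multiparameter Cauchy numbers of the first kind satisfy C_{n,ᾱ,ℓ} = Σ_{j=0}^{n} Σ_{m=j}^{n} S(n,m;ᾱ) s(m,j) ℓ^{j+1} / (j+1). -/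
open Finset

lemma swap_sum (n : ℕ) (f : ℕ → ℕ → ℝ) :
    ∑ m ∈ range (n + 1), ∑ j ∈ range (m + 1), f m j =
    ∑ j ∈ range (n + 1), ∑ m ∈ Icc j n, f m j := by
  refine Finset.sum_comm' fun m j => ?_
  simp only [Finset.mem_range, Nat.lt_succ_iff, Finset.mem_Icc]
  constructor
  · rintro ⟨h1, h2⟩; exact ⟨⟨h2, h1⟩, h2.trans h1⟩
  · rintro ⟨⟨h1, h2⟩, _⟩; exact ⟨h2, h1⟩

lemma integral_monomial_sum (ℓ : ℝ) (t : Finset ℕ) (c : ℕ → ℝ) :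
    (∫ x in (0:ℝ)..ℓ, ∑ j ∈ t, c j * x ^ j) =
    ∑ j ∈ t, c j * ℓ ^ (j + 1) / ((j : ℝ) + 1) := by
  rw [intervalIntegral.integral_finset_sum (f := fun j x => c j * x ^ j)
    (fun j _ => (intervalIntegral.intervalIntegrable_pow j).const_mul _)]
  refine Finset.sum_congr rfl fun j _ => ?_
  rw [intervalIntegral.integral_const_mul, integral_pow]
  ring

lemma integral_double_sum (ℓ : ℝ) (N : ℕ) (c : ℕ → ℕ → ℝ) :
    (∫ x in (0:ℝ)..ℓ, ∑ m ∈ range N, ∑ j ∈ range (m + 1), c m j * x ^ j) =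
    ∑ m ∈ range N, ∑ j ∈ range (m + 1), c m j * ℓ ^ (j + 1) / ((j : ℝ) + 1) := by
  have hc : ∀ m ∈ range N, IntervalIntegrable
      (fun x : ℝ => ∑ j ∈ range (m + 1), c m j * x ^ j) MeasureTheory.volume 0 ℓ := by
    intro m _
    exact (continuous_finset_sum _ fun j _ =>
      (continuous_const.mul (continuous_pow j))).intervalIntegrable _ _
  rw [intervalIntegral.integral_finset_sum
    (f := fun m x => ∑ j ∈ range (m + 1), c m j * x ^ j) hc]
  exact Finset.sum_congr rfl fun m _ => integral_monomial_sum ℓ _ _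

/-- Falling factorial (x)_m = x(x-1)⋯(x-m+1) of a real number. -/
noncomputable def ffall (x : ℝ) (m : ℕ) : ℝ := ∏ i ∈ Finset.range m, (x - (i : ℝ))

theorem stmt3 (n : ℕ) (α : ℕ → ℝ) (ℓ : ℝ) (hℓ : ℓ ≠ 0)
    (S : ℕ → ℝ) (st : ℕ → ℕ → ℝ)
    (hS : ∀ x : ℝ, ∏ i ∈ range n, (x - α i) = ∑ m ∈ range (n + 1), S m * ffall x m)
    (hst : ∀ m ≤ n, ∀ x : ℝ, ffall x m = ∑ j ∈ range (m + 1), st m j * x ^ j) :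
    (∫ x in (0:ℝ)..ℓ, ∏ i ∈ range n, (x - α i)) =
      ∑ j ∈ range (n + 1), ∑ m ∈ Icc j n,
        S m * st m j * ℓ ^ (j + 1) / ((j : ℝ) + 1) := by
  have key : ∀ x : ℝ, ∏ i ∈ range n, (x - α i) =
      ∑ m ∈ range (n + 1), ∑ j ∈ range (m + 1), S m * st m j * x ^ j := by
    intro x
    rw [hS x]
    refine Finset.sum_congr rfl fun m hm => ?_
    rw [hst m (by simpa [Nat.lt_succ_iff] using hm) x, Finset.mul_sum]
    refine Finset.sum_congr rfl fun j _ => ?_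
    ring
  simp_rw [key]
  rw [integral_double_sum ℓ (n + 1) (fun m j => S m * st m j)]
  exact swap_sum n fun m j => S m * st m j * ℓ ^ (j + 1) / ((j : ℝ) + 1)
end

section
/- For all integers n ≥ 0 and k ≥ 1, every sequence of real numbers ᾱ = (α₀, α₁, …, α_{n−1}) and all nonzero real numbers ℓ₁, …, ℓ_k, the multiparameter poly-Cauchy numbers of the first kind satisfy C_{n,L}^{(k)}(ᾱ) = Σ_{m=0}^{n} S(n,m;ᾱ) C_{m,L}^{(k)}, where C_{m,L}^{(k)} = ∫₀^{ℓ₁}⋯∫₀^{ℓ_k} (x₁x₂⋯x_k)_m dx₁⋯dx_k. -/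
open Finset

/-- Iterated integral of the monomial t^j. -/
noncomputable def monInt : List ℝ → ℕ → ℝ
  | [], _ => 1
  | a :: ls, j => (∫ x in (0:ℝ)..a, x ^ j) * monInt ls j

lemma iterInt_powsum (l : List ℝ) : ∀ (N : ℕ) (c : ℕ → ℝ),
    iterInt l (fun t => ∑ j ∈ range N, c j * t ^ j)
      = ∑ j ∈ range N, c j * monInt l j := by
  induction l with
  | nil => intro N c; simp [iterInt, monInt]
  | cons a ls ih =>
    intro N c
    show (∫ x in (0:ℝ)..a, iterInt ls (fun y => ∑ j ∈ range N, c j * (x * y) ^ j)) = _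
    have h1 : ∀ x : ℝ, iterInt ls (fun y => ∑ j ∈ range N, c j * (x * y) ^ j)
        = ∑ j ∈ range N, (c j * x ^ j) * monInt ls j := by
      intro x
      have := ih N (fun j => c j * x ^ j)
      rw [← this]
      congr 1
      funext y
      refine Finset.sum_congr rfl fun j _ => ?_
      ring
    simp only [h1]
    rw [intervalIntegral.integral_finset_sum]
    · refine Finset.sum_congr rfl fun j _ => ?_
      have : ∀ x : ℝ, c j * x ^ j * monInt ls j = (c j * monInt ls j) * x ^ j := by
        intro x; ring
      simp only [this]
      rw [intervalIntegral.integral_const_mul]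
      show c j * monInt ls j * ∫ x in (0:ℝ)..a, x ^ j = c j * monInt (a :: ls) j
      show _ = c j * ((∫ x in (0:ℝ)..a, x ^ j) * monInt ls j)
      ring
    · intro j _
      exact (Continuous.intervalIntegrable (by continuity) 0 a)

lemma iterInt_polyeval (l : List ℝ) (p : Polynomial ℝ) (N : ℕ) (hN : p.natDegree < N) :
    iterInt l (fun t => p.eval t) = ∑ j ∈ range N, p.coeff j * monInt l j := by
  have h : (fun t : ℝ => p.eval t) = fun t => ∑ j ∈ range N, p.coeff j * t ^ j := by
    funext t
    exact p.eval_eq_sum_range' hN t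
  rw [h, iterInt_powsum]

theorem stmt4 (n k : ℕ) (hk : 1 ≤ k) (α : ℕ → ℝ) (L : Fin k → ℝ)
    (hL : ∀ i, L i ≠ 0) (S : ℕ → ℝ)
    (hS : ∀ x : ℝ, ∏ i ∈ range n, (x - α i) = ∑ m ∈ range (n + 1), S m * ffall x m) :
    iterInt (List.ofFn L) (fun t => ∏ i ∈ range n, (t - α i)) =
      ∑ m ∈ range (n + 1), S m * iterInt (List.ofFn L) (fun t => ffall t m) := by
  classical
  set l := List.ofFn L
  set p : Polynomial ℝ := ∏ i ∈ range n, (Polynomial.X - Polynomial.C (α i)) with hp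
  set q : ℕ → Polynomial ℝ := fun m => ∏ i ∈ range m, (Polynomial.X - Polynomial.C (i : ℝ))
    with hq
  have hpe : ∀ x : ℝ, p.eval x = ∏ i ∈ range n, (x - α i) := by
    intro x
    rw [hp, Polynomial.eval_prod]
    exact Finset.prod_congr rfl fun i _ => by simp
  have hqe : ∀ m (x : ℝ), (q m).eval x = ffall x m := by
    intro m x
    rw [hq, ffall, Polynomial.eval_prod]
    exact Finset.prod_congr rfl fun i _ => by simp
  have hpdeg : p.natDegree ≤ n := by
    refine le_trans (Polynomial.natDegree_prod_le _ _) ?_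
    refine le_trans (Finset.sum_le_sum fun i _ =>
      le_of_eq (Polynomial.natDegree_X_sub_C (α i))) (by simp)
  have hqdeg : ∀ m, (q m).natDegree ≤ m := by
    intro m
    refine le_trans (Polynomial.natDegree_prod_le _ _) ?_
    refine le_trans (Finset.sum_le_sum fun i _ =>
      le_of_eq (Polynomial.natDegree_X_sub_C ((i : ℝ)))) (by simp)
  -- polynomial identity
  have hpoly : p = ∑ m ∈ range (n + 1), Polynomial.C (S m) * q m := by
    apply Polynomial.funext
    intro x
    simp only [Polynomial.eval_finset_sum, Polynomial.eval_mul, Polynomial.eval_C]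
    rw [hpe x, hS x]
    exact Finset.sum_congr rfl fun m _ => by rw [hqe]
  have hL1 : iterInt l (fun t => ∏ i ∈ range n, (t - α i))
      = ∑ j ∈ range (n + 1), p.coeff j * monInt l j := by
    rw [← iterInt_polyeval l p (n + 1) (Nat.lt_succ_of_le hpdeg)]
    congr 1
    funext t
    exact (hpe t).symm
  have hR : ∀ m ∈ range (n + 1), iterInt l (fun t => ffall t m)
      = ∑ j ∈ range (n + 1), (q m).coeff j * monInt l j := by
    intro m hm
    rw [← iterInt_polyeval l (q m) (n + 1)
      (Nat.lt_succ_of_le (le_trans (hqdeg m) (Nat.lt_succ_iff.mp (mem_range.mp hm))))]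
    congr 1
    funext t
    exact (hqe m t).symm
  have hcoeff : ∀ j, p.coeff j = ∑ m ∈ range (n + 1), S m * (q m).coeff j := by
    intro j
    rw [hpoly, Polynomial.finset_sum_coeff]
    exact Finset.sum_congr rfl fun m _ => Polynomial.coeff_C_mul _
  rw [hL1]
  have hRsum : ∑ m ∈ range (n + 1), S m * iterInt l (fun t => ffall t m)
      = ∑ m ∈ range (n + 1), S m * ∑ j ∈ range (n + 1), (q m).coeff j * monInt l j :=
    Finset.sum_congr rfl fun m hm => by rw [hR m hm]
  rw [hRsum]
  simp only [hcoeff, Finset.sum_mul, Finset.mul_sum]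
  rw [Finset.sum_comm]
  exact Finset.sum_congr rfl fun m _ => Finset.sum_congr rfl fun j _ => by ring
end

section
/- For all integers n ≥ 0 and k ≥ 1, every sequence of real numbers ᾱ = (α₀, α₁, …, α_{n−1}) and all nonzero real numbers ℓ₁, …, ℓ_k, the multiparameter poly-Cauchy numbers of the second kind satisfy Ĉ_{n,L}^{(k)}(ᾱ) = Σ_{r=0}^{n} Σ_{m=r}^{n} S(n,m;ᾱ) L(m,r) C_{r,L}^{(k)}, where C_{r,L}^{(k)} = ∫₀^{ℓ₁}⋯∫₀^{ℓ_k} (x₁x₂⋯x_k)_r dx₁⋯dx_k. -/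
open Finset

lemma iterInt_const_mul (l : List ℝ) (r : ℝ) (f : ℝ → ℝ) :
    iterInt l (fun t => r * f t) = r * iterInt l f := by
  induction l generalizing f with
  | nil => simp [iterInt]
  | cons a ls ih =>
    simp only [iterInt]
    rw [← intervalIntegral.integral_const_mul]
    congr 1
    funext x
    exact ih _

lemma iterInt_key (l : List ℝ) (s : Finset ℕ) (c : ℕ → ℝ) :
    iterInt l (fun t => ∑ i ∈ s, c i * t ^ i) = ∑ i ∈ s, c i * iterInt l (fun t => t ^ i) := by
  induction l generalizing c with
  | nil => simp [iterInt]
  | cons a ls ih =>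
    simp only [iterInt]
    have h1 : ∀ x : ℝ, iterInt ls (fun y => ∑ i ∈ s, c i * (x * y) ^ i)
        = ∑ i ∈ s, (c i * x ^ i) * iterInt ls (fun t => t ^ i) := by
      intro x
      rw [show (fun y => ∑ i ∈ s, c i * (x * y) ^ i)
          = (fun y => ∑ i ∈ s, (c i * x ^ i) * y ^ i) by funext y; congr 1; ext i; ring]
      exact ih _
    have h4 : ∀ (x : ℝ) (i : ℕ), iterInt ls (fun y => (x * y) ^ i)
        = x ^ i * iterInt ls (fun t => t ^ i) := by
      intro x i
      rw [show (fun y => (x * y) ^ i) = (fun y : ℝ => x ^ i * y ^ i) by funext y; ring]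
      exact iterInt_const_mul ls (x ^ i) _
    simp only [h1, h4]
    rw [intervalIntegral.integral_finset_sum]
    · refine Finset.sum_congr rfl fun i _ => ?_
      rw [← intervalIntegral.integral_const_mul]
      congr 1; funext x; ring
    · intro i _
      exact (Continuous.intervalIntegrable (by continuity) 0 a)

theorem stmt8 (n k : ℕ) (hk : 1 ≤ k) (α : ℕ → ℝ) (L : Fin k → ℝ)
    (hL : ∀ i, L i ≠ 0) (S : ℕ → ℝ) (Lah : ℕ → ℕ → ℝ)
    (hS : ∀ x : ℝ, ∏ i ∈ range n, (x - α i) = ∑ m ∈ range (n + 1), S m * ffall x m)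
    (hLah : ∀ m ≤ n, ∀ x : ℝ, ffall (-x) m = ∑ r ∈ range (m + 1), Lah m r * ffall x r) :
    iterInt (List.ofFn L) (fun t => ∏ i ∈ range n, (-t - α i)) =
      ∑ r ∈ range (n + 1), ∑ m ∈ Icc r n,
        S m * Lah m r * iterInt (List.ofFn L) (fun t => ffall t r) := by
  set l := List.ofFn L with hl
  set Q : Polynomial ℝ := ∏ i ∈ range n, (-Polynomial.X - Polynomial.C (α i)) with hQdef
  set P : ℕ → Polynomial ℝ := fun r => ∏ i ∈ range r, (Polynomial.X - Polynomial.C (i : ℝ))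
    with hPdef
  have hQev : ∀ t : ℝ, Q.eval t = ∏ i ∈ range n, (-t - α i) := by
    intro t; simp [hQdef, Polynomial.eval_prod]
  have hPev : ∀ r (t : ℝ), (P r).eval t = ffall t r := by
    intro r t; simp [hPdef, ffall, Polynomial.eval_prod]
  have hQd : Q.natDegree < n + 1 := by
    refine Nat.lt_succ_of_le (le_trans (Polynomial.natDegree_prod_le _ _) ?_)
    calc ∑ i ∈ range n, (-Polynomial.X - Polynomial.C (α i)).natDegree
        ≤ ∑ i ∈ range n, 1 := by
          refine Finset.sum_le_sum fun i _ => ?_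
          rw [show -Polynomial.X - Polynomial.C (α i)
              = -(Polynomial.X + Polynomial.C (α i)) by ring, Polynomial.natDegree_neg,
            Polynomial.natDegree_X_add_C]
      _ = n := by simp
  have hPd : ∀ r ≤ n, (P r).natDegree < n + 1 := by
    intro r hr
    refine Nat.lt_succ_of_le (le_trans (Polynomial.natDegree_prod_le _ _) ?_)
    calc ∑ i ∈ range r, (Polynomial.X - Polynomial.C ((i : ℕ) : ℝ)).natDegree
        ≤ ∑ i ∈ range r, 1 := by
          exact Finset.sum_le_sum fun i _ => (Polynomial.natDegree_X_sub_C _).le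
      _ = r := by simp
      _ ≤ n := hr
  have hpt : ∀ t : ℝ, ∏ i ∈ range n, (-t - α i)
      = ∑ r ∈ range (n + 1), ∑ m ∈ Icc r n, (S m * Lah m r) * ffall t r := by
    intro t
    rw [hS (-t)]
    calc ∑ m ∈ range (n + 1), S m * ffall (-t) m
        = ∑ m ∈ range (n + 1), ∑ r ∈ range (m + 1), (S m * Lah m r) * ffall t r := by
          refine Finset.sum_congr rfl fun m hm => ?_
          rw [hLah m (Nat.lt_succ_iff.mp (mem_range.mp hm)) t, Finset.mul_sum]
          exact Finset.sum_congr rfl fun r _ => by ring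
      _ = ∑ r ∈ range (n + 1), ∑ m ∈ Icc r n, (S m * Lah m r) * ffall t r := by
          refine Finset.sum_comm' ?_
          intro m r
          simp only [mem_range, mem_Icc, Nat.lt_succ_iff]
          omega
  have hpoly : Q = ∑ r ∈ range (n + 1), ∑ m ∈ Icc r n, (S m * Lah m r) • P r := by
    refine Polynomial.funext fun t => ?_
    rw [hQev t, hpt t]
    simp [Polynomial.eval_finset_sum, hPev]
  have hcoeff : ∀ j, Q.coeff j
      = ∑ r ∈ range (n + 1), ∑ m ∈ Icc r n, S m * Lah m r * (P r).coeff j := by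
    intro j
    rw [hpoly]
    simp [Polynomial.finset_sum_coeff, Polynomial.coeff_smul, smul_eq_mul]
  have hre : ∀ r ≤ n, iterInt l (fun t => ffall t r)
      = ∑ j ∈ range (n + 1), (P r).coeff j * iterInt l (fun t => t ^ j) := by
    intro r hr
    rw [show (fun t => ffall t r)
        = (fun t => ∑ j ∈ range (n + 1), (P r).coeff j * t ^ j) by
      funext t; rw [← hPev r t, Polynomial.eval_eq_sum_range' (hPd r hr)]]
    exact iterInt_key l _ _
  calc iterInt l (fun t => ∏ i ∈ range n, (-t - α i))
      = ∑ j ∈ range (n + 1), Q.coeff j * iterInt l (fun t => t ^ j) := by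
        rw [show (fun t => ∏ i ∈ range n, (-t - α i))
            = (fun t => ∑ j ∈ range (n + 1), Q.coeff j * t ^ j) by
          funext t; rw [← hQev t, Polynomial.eval_eq_sum_range' hQd]]
        exact iterInt_key l _ _
    _ = ∑ r ∈ range (n + 1), ∑ m ∈ Icc r n,
          S m * Lah m r * ∑ j ∈ range (n + 1), (P r).coeff j * iterInt l (fun t => t ^ j) := by
        simp only [hcoeff, Finset.sum_mul, Finset.mul_sum]
        rw [Finset.sum_comm]
        refine Finset.sum_congr rfl fun r _ => ?_
        rw [Finset.sum_comm]
        exact Finset.sum_congr rfl fun m _ => Finset.sum_congr rfl fun j _ => by ring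
    _ = ∑ r ∈ range (n + 1), ∑ m ∈ Icc r n,
          S m * Lah m r * iterInt l (fun t => ffall t r) := by
        refine Finset.sum_congr rfl fun r hr => Finset.sum_congr rfl fun m _ => ?_
        rw [hre r (Nat.lt_succ_iff.mp (mem_range.mp hr))]
end

section
/- For every integer n ≥ 0, every sequence of real numbers ᾱ = (α₀, α₁, …, α_{n−1}) and every nonzero real number ℓ, the multiparameter Cauchy numbers of the second kind satisfy Ĉ_{n,ᾱ,ℓ} = Σ_{r=0}^{n} Σ_{m=r}^{n} S(n,m;ᾱ) L(m,r) C_{r,ℓ}, where C_{r,ℓ} = ∫₀^{ℓ} (x)_r dx. -/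
open Finset

lemma ffall_continuous (m : ℕ) : Continuous fun x : ℝ => ffall x m := by
  unfold ffall
  exact continuous_finset_prod _ fun i _ => continuous_id.sub continuous_const

theorem stmt9 (n : ℕ) (α : ℕ → ℝ) (ℓ : ℝ) (hℓ : ℓ ≠ 0)
    (S : ℕ → ℝ) (Lah : ℕ → ℕ → ℝ)
    (hS : ∀ x : ℝ, ∏ i ∈ range n, (x - α i) = ∑ m ∈ range (n + 1), S m * ffall x m)
    (hLah : ∀ m ≤ n, ∀ x : ℝ, ffall (-x) m = ∑ r ∈ range (m + 1), Lah m r * ffall x r) :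
    (∫ x in (0:ℝ)..ℓ, ∏ i ∈ range n, (-x - α i)) =
      ∑ r ∈ range (n + 1), ∑ m ∈ Icc r n,
        S m * Lah m r * (∫ x in (0:ℝ)..ℓ, ffall x r) := by
  have key : ∀ x : ℝ, ∏ i ∈ range n, (-x - α i) =
      ∑ m ∈ range (n + 1), ∑ r ∈ range (m + 1), S m * Lah m r * ffall x r := by
    intro x
    have h1 := hS (-x)
    simp only [neg_sub_left] at h1
    have : ∀ i : ℕ, -x - α i = -(x + α i) := by intro i; ring
    calc ∏ i ∈ range n, (-x - α i) = ∑ m ∈ range (n + 1), S m * ffall (-x) m := hS (-x)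
      _ = ∑ m ∈ range (n + 1), ∑ r ∈ range (m + 1), S m * Lah m r * ffall x r := by
          refine Finset.sum_congr rfl fun m hm => ?_
          rw [hLah m (Nat.lt_succ_iff.mp (Finset.mem_range.mp hm)) x, Finset.mul_sum]
          exact Finset.sum_congr rfl fun r _ => by ring
  rw [intervalIntegral.integral_congr (fun x _ => key x)]
  rw [intervalIntegral.integral_finset_sum (fun m _ =>
    (continuous_finset_sum _ (fun r _ =>
      continuous_const.mul (ffall_continuous r)) :
        Continuous fun x => ∑ r ∈ range (m + 1), S m * Lah m r * ffall x r).intervalIntegrable _ _)]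
  have : ∀ m ∈ range (n + 1),
      (∫ x in (0:ℝ)..ℓ, ∑ r ∈ range (m + 1), S m * Lah m r * ffall x r) =
      ∑ r ∈ range (m + 1), S m * Lah m r * ∫ x in (0:ℝ)..ℓ, ffall x r := by
    intro m _
    rw [intervalIntegral.integral_finset_sum (fun r _ =>
      (show Continuous fun x => S m * Lah m r * ffall x r from
        continuous_const.mul (ffall_continuous r)).intervalIntegrable _ _)]
    exact Finset.sum_congr rfl fun r _ => intervalIntegral.integral_const_mul _ _
  rw [Finset.sum_congr rfl this]
  refine Finset.sum_comm' ?_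
  intro m r
  simp only [Finset.mem_range, Finset.mem_Icc, Nat.lt_succ_iff]
  omega
end

section
/- For all integers n ≥ 0 and k ≥ 1, every sequence of real numbers ᾱ = (α₀, α₁, …, α_{n−1}) and all nonzero real numbers ℓ₁, …, ℓ_k, the multiparameter poly-Cauchy numbers of the second kind are expressed through the multiparameter poly-Bernoulli numbers by Ĉ_{n,L}^{(k)}(ᾱ) = Σ_{j=0}^{n} Σ_{m=j}^{n} (−1)^j (s_ᾱ(n,m) s_ᾱ(m,j) / m!) B_{j,ᾱ,L}^{(k)}. -/
open Finset

lemma iterInt_sum (ls : List ℝ) (N : ℕ) (c : ℕ → ℝ) :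
    iterInt ls (fun t => ∑ j ∈ range N, c j * t ^ j) =
    ∑ j ∈ range N, c j * ls.prod ^ (j+1) / ((j:ℝ)+1) ^ ls.length := by
  induction ls generalizing c with
  | nil => simp [iterInt]
  | cons l ls ih =>
    show (∫ x in (0:ℝ)..l, iterInt ls fun y => ∑ j ∈ range N, c j * (x*y)^j) = _
    have h1 : ∀ x : ℝ, (iterInt ls fun y => ∑ j ∈ range N, c j * (x*y)^j)
        = ∑ j ∈ range N, (c j * ls.prod ^ (j+1) / ((j:ℝ)+1) ^ ls.length) * x ^ j := by
      intro x
      have : (fun y => ∑ j ∈ range N, c j * (x*y)^j)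
          = fun y => ∑ j ∈ range N, (c j * x ^ j) * y ^ j := by
        funext y; exact Finset.sum_congr rfl (fun j _ => by ring)
      rw [this, ih]
      exact Finset.sum_congr rfl (fun j _ => by ring)
    simp only [h1]
    rw [intervalIntegral.integral_finset_sum (fun j _ => by
      exact ((continuous_const.mul (continuous_pow j)).intervalIntegrable 0 l))]
    refine Finset.sum_congr rfl (fun j _ => ?_)
    rw [intervalIntegral.integral_const_mul, integral_pow]
    have hj : ((j:ℝ)+1) ≠ 0 := by positivity
    simp only [List.prod_cons, List.length_cons, zero_pow (Nat.succ_ne_zero j)]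
    field_simp
    ring

lemma coeff_ext {N : ℕ} {d e : ℕ → ℝ}
    (h : ∀ x : ℝ, ∑ j ∈ range N, d j * x ^ j = ∑ j ∈ range N, e j * x ^ j) :
    ∀ j < N, d j = e j := by
  intro j hj
  have hp : (∑ i ∈ range N, Polynomial.C (d i) * Polynomial.X ^ i)
      = ∑ i ∈ range N, Polynomial.C (e i) * Polynomial.X ^ i := by
    apply Polynomial.funext; intro x
    simpa [Polynomial.eval_finset_sum] using h x
  have := congrArg (fun p => Polynomial.coeff p j) hp
  simpa [Polynomial.finset_sum_coeff, Polynomial.coeff_C_mul, Polynomial.coeff_X_pow,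
    Finset.sum_ite_eq, hj] using this

lemma swapIcc (n : ℕ) (f : ℕ → ℕ → ℝ) :
    ∑ j ∈ range (n+1), ∑ m ∈ Icc j n, f j m
      = ∑ m ∈ range (n+1), ∑ j ∈ range (m+1), f j m :=
  Finset.sum_comm' (fun j m => by
    simp only [Finset.mem_range, Finset.mem_Icc]; omega)

lemma ortho (n : ℕ) (s S : ℕ → ℕ → ℝ)
    (h1 : ∀ q ≤ n, ∀ j ≤ q, ∑ m ∈ Icc j q, S q m * s m j = if j = q then 1 else 0) :
    ∀ m ≤ n, ∀ p ≤ m, ∑ j ∈ Icc p m, s m j * S j p = if p = m then 1 else 0 := by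
  set M : Matrix (Fin (n+1)) (Fin (n+1)) ℝ :=
    fun q m => if (m:ℕ) ≤ (q:ℕ) then S q m else 0 with hM
  set N : Matrix (Fin (n+1)) (Fin (n+1)) ℝ :=
    fun m j => if (j:ℕ) ≤ (m:ℕ) then s m j else 0 with hN
  have key : M * N = 1 := by
    ext q j
    rw [Matrix.mul_apply, Matrix.one_apply]
    have hterm : ∀ m : Fin (n+1), M q m * N m j
        = (fun m : ℕ => if (j:ℕ) ≤ m ∧ m ≤ (q:ℕ) then S q m * s m j else 0) (m : ℕ) := by
      intro m
      simp only [hM, hN]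
      split_ifs <;> simp_all <;> omega
    rw [Finset.sum_congr rfl (fun m _ => hterm m),
      Fin.sum_univ_eq_sum_range
        (fun m : ℕ => if (j:ℕ) ≤ m ∧ m ≤ (q:ℕ) then S q m * s m j else 0) (n+1),
      ← Finset.sum_filter]
    have hfilt : (range (n+1)).filter (fun m => (j:ℕ) ≤ m ∧ m ≤ (q:ℕ))
        = Icc (j:ℕ) (q:ℕ) := by
      ext m
      simp only [Finset.mem_filter, Finset.mem_range, Finset.mem_Icc]
      have := q.isLt
      omega
    rw [hfilt]
    by_cases hjq : (j:ℕ) ≤ (q:ℕ)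
    · rw [h1 q (Nat.lt_succ_iff.mp q.isLt) j hjq]
      by_cases hje : (j:ℕ) = (q:ℕ)
      · rw [if_pos hje, if_pos (Fin.ext hje.symm)]
      · have hne : ¬ q = j := fun h => hje (by rw [h])
        rw [if_neg hje, if_neg hne]
    · have h0 : Icc (j:ℕ) (q:ℕ) = ∅ := by
        rw [Finset.Icc_eq_empty]; omega
      have : ¬ q = j := fun h => hjq (by rw [h])
      simp [h0, this]
  have key2 : N * M = 1 := mul_eq_one_comm.mp key
  intro m hm p hp
  have hmf : m < n + 1 := Nat.lt_succ_of_le hm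
  have hpf : p < n + 1 := Nat.lt_succ_of_le (hp.trans hm)
  have := congrFun (congrFun key2 ⟨m, hmf⟩) ⟨p, hpf⟩
  rw [Matrix.mul_apply, Matrix.one_apply] at this
  have hterm : ∀ j : Fin (n+1), N ⟨m, hmf⟩ j * M j ⟨p, hpf⟩
      = (fun j : ℕ => if p ≤ j ∧ j ≤ m then s m j * S j p else 0) (j : ℕ) := by
    intro j
    simp only [hM, hN]
    split_ifs <;> simp_all <;> omega
  rw [Finset.sum_congr rfl (fun j _ => hterm j),
    Fin.sum_univ_eq_sum_range
      (fun j : ℕ => if p ≤ j ∧ j ≤ m then s m j * S j p else 0) (n+1),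
    ← Finset.sum_filter] at this
  have hfilt : (range (n+1)).filter (fun j => p ≤ j ∧ j ≤ m) = Icc p m := by
    ext j
    simp only [Finset.mem_filter, Finset.mem_range, Finset.mem_Icc]
    omega
  rw [hfilt] at this
  rw [this]
  simp [Fin.ext_iff, eq_comm]

theorem stmt10 (n k : ℕ) (hk : 1 ≤ k) (α : ℕ → ℝ) (L : Fin k → ℝ)
    (hL : ∀ i, L i ≠ 0) (s : ℕ → ℕ → ℝ) (S : ℕ → ℕ → ℝ)
    (hs : ∀ m ≤ n, ∀ x : ℝ,
      ∏ i ∈ range m, (x - α i) = ∑ j ∈ range (m + 1), s m j * x ^ j)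
    (hS : ∀ p ≤ n, ∀ x : ℝ,
      x ^ p = ∑ m ∈ range (p + 1), S p m * ∏ i ∈ range m, (x - α i)) :
    iterInt (List.ofFn L) (fun t => ∏ i ∈ range n, (-t - α i)) =
      ∑ j ∈ range (n + 1), ∑ m ∈ Icc j n,
        (-1 : ℝ) ^ j * (s n m * s m j / (m.factorial : ℝ)) *
          (∑ p ∈ range (j + 1),
            (-1 : ℝ) ^ (j - p) * (p.factorial : ℝ) * S j p *
              (∏ i, L i) ^ (p + 1) / ((p : ℝ) + 1) ^ k) := by
  have hP : (List.ofFn L).prod = ∏ i, L i := List.prod_ofFn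
  have hlen : (List.ofFn L).length = k := List.length_ofFn
  set P : ℝ := ∏ i, L i with hPdef
  -- rewrite the integrand as a polynomial
  have hfun : (fun t : ℝ => ∏ i ∈ range n, (-t - α i))
      = fun t => ∑ j ∈ range (n+1), (s n j * (-1:ℝ)^j) * t^j := by
    funext t
    rw [hs n le_rfl (-t)]
    exact Finset.sum_congr rfl (fun j _ => by rw [neg_pow]; ring)
  rw [hfun, iterInt_sum, hlen, hP]
  -- direct orthogonality via coefficient comparison
  have h1 : ∀ q ≤ n, ∀ j ≤ q,
      ∑ m ∈ Icc j q, S q m * s m j = if j = q then 1 else 0 := by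
    intro q hq
    have hx : ∀ x : ℝ, ∑ j ∈ range (q+1), (∑ m ∈ Icc j q, S q m * s m j) * x^j
        = ∑ j ∈ range (q+1), (if j = q then 1 else 0) * x^j := by
      intro x
      have e1 : x^q = ∑ m ∈ range (q+1), ∑ j ∈ range (m+1), (S q m * s m j) * x^j := by
        rw [hS q hq x]
        refine Finset.sum_congr rfl (fun m hm => ?_)
        rw [hs m (le_trans (Nat.lt_succ_iff.mp (mem_range.mp hm)) hq) x, Finset.mul_sum]
        exact Finset.sum_congr rfl (fun j _ => by ring)
      have e2 : x^q = ∑ j ∈ range (q+1), (if j = q then 1 else 0) * x^j := by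
        simp [ite_mul, Finset.sum_ite_eq, Nat.lt_succ_iff]
      calc ∑ j ∈ range (q+1), (∑ m ∈ Icc j q, S q m * s m j) * x^j
          = ∑ j ∈ range (q+1), ∑ m ∈ Icc j q, (S q m * s m j) * x^j := by
            exact Finset.sum_congr rfl (fun j _ => Finset.sum_mul _ _ _)
        _ = ∑ m ∈ range (q+1), ∑ j ∈ range (m+1), (S q m * s m j) * x^j :=
            swapIcc q _
        _ = x^q := e1.symm
        _ = ∑ j ∈ range (q+1), (if j = q then 1 else 0) * x^j := e2
    exact fun j hj => coeff_ext hx j (Nat.lt_succ_of_le hj)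
  have h2 := ortho n s S h1
  -- swap the double sum on the RHS
  rw [swapIcc]
  refine Finset.sum_congr rfl (fun m hm => ?_)
  have hm' : m ≤ n := Nat.lt_succ_iff.mp (mem_range.mp hm)
  have hmfac : (m.factorial : ℝ) ≠ 0 := Nat.cast_ne_zero.mpr m.factorial_ne_zero
  set K : ℕ → ℝ := fun p => (-1:ℝ)^p * s n m * (p.factorial : ℝ) * P^(p+1)
      / (((p:ℝ)+1)^k * (m.factorial : ℝ)) with hK
  calc s n m * (-1:ℝ)^m * P ^ (m+1) / ((m:ℝ)+1) ^ k
      = ∑ p ∈ range (m+1), (if p = m then K p else 0) := by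
        rw [Finset.sum_ite_eq' (range (m+1)) m K, if_pos (self_mem_range_succ m), hK]
        have h1k : (((m:ℝ)+1)^k) ≠ 0 := by positivity
        field_simp
    _ = ∑ p ∈ range (m+1), K p * (if p = m then 1 else 0) := by
        exact Finset.sum_congr rfl (fun p _ => by split_ifs <;> simp)
    _ = ∑ p ∈ range (m+1), K p * (∑ j ∈ Icc p m, s m j * S j p) := by
        refine Finset.sum_congr rfl (fun p hp => ?_)
        rw [h2 m hm' p (Nat.lt_succ_iff.mp (mem_range.mp hp))]
    _ = ∑ p ∈ range (m+1), ∑ j ∈ Icc p m,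
          (-1:ℝ)^j * (s n m * s m j / (m.factorial : ℝ)) *
            ((-1:ℝ)^(j-p) * (p.factorial : ℝ) * S j p * P^(p+1) / ((p:ℝ)+1)^k) := by
        refine Finset.sum_congr rfl (fun p hp => ?_)
        rw [Finset.mul_sum]
        refine Finset.sum_congr rfl (fun j hj => ?_)
        obtain ⟨hpj, hjm⟩ := Finset.mem_Icc.mp hj
        obtain ⟨d, rfl⟩ : ∃ d, j = p + d := ⟨j - p, by omega⟩
        have hd : p + d - p = d := by omega
        have hdd : (-1:ℝ)^d * (-1:ℝ)^d = 1 := by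
          rw [← pow_add]; exact Even.neg_one_pow ⟨d, rfl⟩
        rw [hd, pow_add]
        calc K p * (s m (p+d) * S (p+d) p)
            = ((-1:ℝ)^d * (-1:ℝ)^d) * (K p * (s m (p+d) * S (p+d) p)) := by
              rw [hdd, one_mul]
          _ = (-1:ℝ)^p * (-1:ℝ)^d * (s n m * s m (p+d) / (m.factorial : ℝ)) *
                ((-1:ℝ)^d * (p.factorial : ℝ) * S (p+d) p * P^(p+1) / ((p:ℝ)+1)^k) := by
              rw [hK]; ring
    _ = ∑ j ∈ range (m+1), ∑ p ∈ range (j+1),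
          (-1:ℝ)^j * (s n m * s m j / (m.factorial : ℝ)) *
            ((-1:ℝ)^(j-p) * (p.factorial : ℝ) * S j p * P^(p+1) / ((p:ℝ)+1)^k) := by
        exact swapIcc m (fun p j => (-1:ℝ)^j * (s n m * s m j / (m.factorial : ℝ)) *
            ((-1:ℝ)^(j-p) * (p.factorial : ℝ) * S j p * P^(p+1) / ((p:ℝ)+1)^k))
    _ = ∑ j ∈ range (m+1),
          (-1:ℝ)^j * (s n m * s m j / (m.factorial : ℝ)) *
            (∑ p ∈ range (j+1),
              (-1:ℝ)^(j-p) * (p.factorial : ℝ) * S j p * P^(p+1) / ((p:ℝ)+1)^k) := by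
        exact Finset.sum_congr rfl (fun j _ => (Finset.mul_sum _ _ _).symm)
end

section
/- For all integers n ≥ 0 and k ≥ 1, every sequence of real numbers ᾱ = (α₀, α₁, …, α_{n−1}), all nonzero real numbers ℓ₁, …, ℓ_k, and every real number z, the multiparameter poly-Cauchy polynomials of the first kind satisfy C_{n,L}^{(k)}(z;ᾱ) = Σ_{i=0}^{n} Σ_{m=i}^{n} (−1)^i binom(m,i) s_ᾱ(n,m) (ℓ₁ℓ₂⋯ℓ_k)^{m−i+1} / (m−i+1)^k · z^i. -/
open Finset

lemma iterInt_sum_monomial {ι : Type*} (S : Finset ι) (e : ι → ℕ) :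
    ∀ (ls : List ℝ) (c : ι → ℝ),
      iterInt ls (fun t => ∑ p ∈ S, c p * t ^ e p) =
        ∑ p ∈ S, c p * ls.prod ^ (e p + 1) / ((e p : ℝ) + 1) ^ ls.length := by
  intro ls
  induction ls with
  | nil => intro c; simp [iterInt]
  | cons l ls ih =>
      intro c
      have h1 : iterInt (l :: ls) (fun t => ∑ p ∈ S, c p * t ^ e p) =
          ∫ x in (0:ℝ)..l, ∑ p ∈ S,
            (c p * x ^ e p) * ls.prod ^ (e p + 1) / ((e p : ℝ) + 1) ^ ls.length := by
        simp only [iterInt]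
        congr 1
        funext x
        rw [show (fun y => ∑ p ∈ S, c p * (x * y) ^ e p) =
            (fun y => ∑ p ∈ S, (fun q => c q * x ^ e q) p * y ^ e p) by
          funext y; apply Finset.sum_congr rfl; intro p _; ring]
        exact ih _
      rw [h1, intervalIntegral.integral_finset_sum]
      · apply Finset.sum_congr rfl
        intro p _
        have : (fun x : ℝ => (c p * x ^ e p) * ls.prod ^ (e p + 1) / ((e p : ℝ) + 1) ^ ls.length)
            = fun x : ℝ => (c p * ls.prod ^ (e p + 1) / ((e p : ℝ) + 1) ^ ls.length) * x ^ e p := by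
          funext x; ring
        rw [this, intervalIntegral.integral_const_mul, integral_pow]
        have hep : ((e p : ℝ) + 1) ≠ 0 := by positivity
        simp only [List.prod_cons, List.length_cons]
        field_simp
        ring
      · intro p _
        apply Continuous.intervalIntegrable
        continuity

set_option maxRecDepth 8000 in
theorem stmt14 (n k : ℕ) (hk : 1 ≤ k) (α : ℕ → ℝ) (L : Fin k → ℝ)
    (hL : ∀ i, L i ≠ 0) (z : ℝ) (s : ℕ → ℝ)
    (hs : ∀ x : ℝ, ∏ i ∈ range n, (x - α i) = ∑ m ∈ range (n + 1), s m * x ^ m) :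
    iterInt (List.ofFn L) (fun t => ∏ i ∈ range n, (t - α i - z)) =
      ∑ i ∈ range (n + 1), ∑ m ∈ Icc i n,
        (-1 : ℝ) ^ i * (m.choose i : ℝ) * s m *
          (∏ j, L j) ^ (m - i + 1) / (((m - i : ℕ) : ℝ) + 1) ^ k * z ^ i := by
  classical
  set S : Finset ((_ : ℕ) × ℕ) := (range (n + 1)).sigma (fun m => range (m + 1)) with hS
  have hfun : (fun t : ℝ => ∏ i ∈ range n, (t - α i - z)) =
      fun t : ℝ => ∑ p ∈ S, (s p.1 * (p.1.choose p.2 : ℝ) * (-z) ^ p.2) * t ^ (p.1 - p.2) := by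
    funext t
    have h0 : ∏ i ∈ range n, (t - α i - z) = ∏ i ∈ range n, ((t - z) - α i) := by
      apply Finset.prod_congr rfl; intro i _; ring
    rw [h0, hs (t - z), Finset.sum_sigma]
    apply Finset.sum_congr rfl
    intro m _
    have : (t - (z)) ^ m = (t + (-z)) ^ m := by ring_nf
    rw [this, add_pow, Finset.mul_sum, ← Finset.sum_range_reflect]
    apply Finset.sum_congr rfl
    intro i hi
    have hi' : i ≤ m := Nat.lt_succ_iff.mp (Finset.mem_range.mp hi)
    simp only [Nat.add_sub_cancel]
    rw [Nat.sub_sub_self hi', Nat.choose_symm hi']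
    ring
  rw [hfun, iterInt_sum_monomial S (fun p => p.1 - p.2) (List.ofFn L)
      (fun p => s p.1 * (p.1.choose p.2 : ℝ) * (-z) ^ p.2)]
  rw [Finset.sum_sigma]
  rw [Finset.sum_comm' (t' := range (n + 1)) (s' := fun i => Icc i n)
      (by
        intro m i
        simp only [Finset.mem_range, Finset.mem_Icc, Nat.lt_succ_iff]
        omega)]
  apply Finset.sum_congr rfl
  intro i _
  apply Finset.sum_congr rfl
  intro m _
  rw [List.prod_ofFn, List.length_ofFn, neg_pow]
  ring
end

section
/- For all integers n ≥ 0 and k ≥ 1, every sequence of real numbers ᾱ = (α₀, α₁, …, α_{n−1}), all nonzero real numbers ℓ₁, …, ℓ_k, and every real number z, the multiparameter poly-Bernoulli polynomials are expressed through the multiparameter poly-Cauchy polynomials of the first kind by B_{n,ᾱ,L}^{(k)}(z) = Σ_{j=0}^{n} Σ_{m=j}^{n} (−1)^{n−m} m! S_ᾱ(n,m) S_ᾱ(m,j) C_{j,L}^{(k)}(z;ᾱ). -/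
open Finset

lemma iterInt_polysum (l : List ℝ) (N : ℕ) (c : ℕ → ℝ) :
    iterInt l (fun t => ∑ p ∈ range N, c p * t ^ p)
      = ∑ p ∈ range N, c p * l.prod ^ (p + 1) / ((p : ℝ) + 1) ^ l.length := by
  induction l generalizing c with
  | nil => simp [iterInt]
  | cons a ls ih =>
    show (∫ x in (0:ℝ)..a, iterInt ls (fun y => ∑ p ∈ range N, c p * (x * y) ^ p)) = _
    have h1 : ∀ x : ℝ, iterInt ls (fun y => ∑ p ∈ range N, c p * (x * y) ^ p)
        = ∑ p ∈ range N, (c p * x ^ p) * ls.prod ^ (p + 1) / ((p : ℝ) + 1) ^ ls.length := by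
      intro x
      rw [← ih (fun p => c p * x ^ p)]
      congr 1
      funext y
      exact Finset.sum_congr rfl (fun p _ => by ring)
    simp_rw [h1]
    rw [intervalIntegral.integral_finset_sum]
    · refine Finset.sum_congr rfl (fun p _ => ?_)
      have : (fun x : ℝ => c p * x ^ p * ls.prod ^ (p + 1) / ((p : ℝ) + 1) ^ ls.length)
          = fun x : ℝ => (c p * ls.prod ^ (p + 1) / ((p : ℝ) + 1) ^ ls.length) * x ^ p := by
        funext x; ring
      rw [this, intervalIntegral.integral_const_mul, integral_pow]
      simp only [List.prod_cons, List.length_cons]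
      have hp : ((p : ℝ) + 1) ≠ 0 := by positivity
      field_simp
      ring
    · intro p _
      exact (Continuous.intervalIntegrable (by fun_prop) _ _)

lemma swap_tri (n : ℕ) (f : ℕ → ℕ → ℝ) :
    ∑ j ∈ range (n + 1), ∑ m ∈ Icc j n, f j m
      = ∑ m ∈ range (n + 1), ∑ j ∈ range (m + 1), f j m := by
  have h1 : ∀ j, Icc j n = (range (n + 1)).filter (fun m => j ≤ m) := by
    intro j; ext m; simp [Nat.lt_succ_iff]; omega
  have h2 : ∀ m ∈ range (n + 1),
      (range (n + 1)).filter (fun j => j ≤ m) = range (m + 1) := by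
    intro m hm; simp only [mem_range] at hm; ext j
    simp [Nat.lt_succ_iff]; omega
  simp_rw [h1, Finset.sum_filter]
  rw [Finset.sum_comm]
  refine Finset.sum_congr rfl (fun m hm => ?_)
  rw [← Finset.sum_filter, h2 m hm]

lemma neg_one_pow_sub (n m : ℕ) (h : m ≤ n) :
    (-1 : ℝ) ^ (n - m) = (-1 : ℝ) ^ n * (-1 : ℝ) ^ m := by
  have key : (-1 : ℝ) ^ (n - m) * (-1 : ℝ) ^ m = (-1 : ℝ) ^ n := by
    rw [← pow_add, Nat.sub_add_cancel h]
  have hm : ((-1 : ℝ) ^ m) * ((-1:ℝ)^m) = 1 := by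
    rw [← pow_add, Even.neg_one_pow ⟨m, rfl⟩]
  calc (-1 : ℝ) ^ (n - m) = (-1:ℝ)^(n-m) * ((-1:ℝ)^m * (-1:ℝ)^m) := by rw [hm, mul_one]
    _ = ((-1:ℝ)^(n-m) * (-1:ℝ)^m) * (-1:ℝ)^m := by ring
    _ = (-1:ℝ)^n * (-1:ℝ)^m := by rw [key]

theorem stmt16 (n k : ℕ) (hk : 1 ≤ k) (α : ℕ → ℝ) (L : Fin k → ℝ)
    (hL : ∀ i, L i ≠ 0) (z : ℝ) (S : ℕ → ℕ → ℝ)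
    (hS : ∀ p ≤ n, ∀ x : ℝ,
      x ^ p = ∑ m ∈ range (p + 1), S p m * ∏ i ∈ range m, (x - α i)) :
    (-1 : ℝ) ^ n * ∑ i ∈ range (n + 1), ∑ m ∈ Icc i n,
        (-1 : ℝ) ^ m * (m.factorial : ℝ) * (m.choose i : ℝ) * S n m *
          (∏ j, L j) ^ (m - i + 1) / (((m - i : ℕ) : ℝ) + 1) ^ k * (-z) ^ i =
      ∑ j ∈ range (n + 1), ∑ m ∈ Icc j n,
        (-1 : ℝ) ^ (n - m) * (m.factorial : ℝ) * S n m * S m j *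
          iterInt (List.ofFn L) (fun t => ∏ i ∈ range j, (t - α i - z)) := by
  classical
  set A : ℝ := ∏ j, L j with hA
  set P : ℕ → Polynomial ℝ :=
    fun j => ∏ i ∈ range j, (Polynomial.X - Polynomial.C (α i + z)) with hP
  set e : ℕ → ℕ → ℝ := fun j p => (P j).coeff p with he
  -- degree bound
  have hdeg : ∀ j ≤ n, (P j).natDegree < n + 1 := by
    intro j hj
    have h1 : (P j).natDegree ≤ ∑ i ∈ range j,
        (Polynomial.X - Polynomial.C (α i + z)).natDegree :=
      Polynomial.natDegree_prod_le _ _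
    have h2 : ∀ i, (Polynomial.X - Polynomial.C (α i + z)).natDegree = 1 :=
      fun i => Polynomial.natDegree_X_sub_C _
    simp only [h2, Finset.sum_const, card_range, smul_eq_mul, mul_one] at h1
    omega
  -- eval of P j
  have hPeval : ∀ j, ∀ t : ℝ, (P j).eval t = ∏ i ∈ range j, (t - α i - z) := by
    intro j t
    rw [hP, Polynomial.eval_prod]
    exact Finset.prod_congr rfl (fun i _ => by simp [sub_sub])
  -- Fact A : expansion of the product as a polynomial sum
  have factA : ∀ j ≤ n, (fun t : ℝ => ∏ i ∈ range j, (t - α i - z))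
      = fun t => ∑ p ∈ range (n + 1), e j p * t ^ p := by
    intro j hj
    funext t
    rw [← hPeval j t, Polynomial.eval_eq_sum_range' (hdeg j hj)]
  -- value of the iterated integral
  have hiter : ∀ j ≤ n, iterInt (List.ofFn L) (fun t => ∏ i ∈ range j, (t - α i - z))
      = ∑ p ∈ range (n + 1), e j p * A ^ (p + 1) / ((p : ℝ) + 1) ^ k := by
    intro j hj
    rw [factA j hj, iterInt_polysum]
    simp [List.prod_ofFn, hA]
  -- Fact B : Stirling recombination of coefficients
  have factB : ∀ m ≤ n, ∀ p, ∑ j ∈ range (m + 1), S m j * e j p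
      = (-z) ^ (m - p) * (m.choose p : ℝ) := by
    intro m hm p
    have hpoly : ∑ j ∈ range (m + 1), Polynomial.C (S m j) * P j
        = (Polynomial.X + Polynomial.C (-z)) ^ m := by
      apply Polynomial.funext
      intro t
      rw [Polynomial.eval_finset_sum]
      simp only [Polynomial.eval_mul, Polynomial.eval_C, Polynomial.eval_pow,
        Polynomial.eval_add, Polynomial.eval_X, hPeval]
      have := hS m hm (t - z)
      have h2 : ∀ j, ∏ i ∈ range j, (t - z - α i) = ∏ i ∈ range j, (t - α i - z) := by
        intro j; exact Finset.prod_congr rfl (fun i _ => by ring)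
      simp only [h2] at this
      rw [← this]
      ring
    have := congrArg (fun q => Polynomial.coeff q p) hpoly
    simp only [Polynomial.finset_sum_coeff, Polynomial.coeff_C_mul,
      Polynomial.coeff_X_add_C_pow] at this
    exact this
  -- rewrite RHS using hiter
  have hRHS : ∑ j ∈ range (n + 1), ∑ m ∈ Icc j n,
        (-1 : ℝ) ^ (n - m) * (m.factorial : ℝ) * S n m * S m j *
          iterInt (List.ofFn L) (fun t => ∏ i ∈ range j, (t - α i - z))
      = ∑ m ∈ range (n + 1), ((-1 : ℝ) ^ (n - m) * (m.factorial : ℝ) * S n m) *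
          ∑ p ∈ range (n + 1),
            ((-z) ^ (m - p) * (m.choose p : ℝ)) * (A ^ (p + 1) / ((p : ℝ) + 1) ^ k) := by
    have step1 : ∀ j ∈ range (n + 1), ∀ m ∈ Icc j n,
        (-1 : ℝ) ^ (n - m) * (m.factorial : ℝ) * S n m * S m j *
          iterInt (List.ofFn L) (fun t => ∏ i ∈ range j, (t - α i - z))
        = (-1 : ℝ) ^ (n - m) * (m.factorial : ℝ) * S n m * S m j *
          ∑ p ∈ range (n + 1), e j p * A ^ (p + 1) / ((p : ℝ) + 1) ^ k := by
      intro j hj m hm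
      rw [hiter j (by simp only [mem_range] at hj; omega)]
    rw [Finset.sum_congr rfl (fun j hj => Finset.sum_congr rfl (step1 j hj)),
      swap_tri]
    refine Finset.sum_congr rfl (fun m hm => ?_)
    have hmn : m ≤ n := by simp only [mem_range] at hm; omega
    have e1 : ∀ j ∈ range (m + 1),
        (-1 : ℝ) ^ (n - m) * (m.factorial : ℝ) * S n m * S m j *
            ∑ p ∈ range (n + 1), e j p * A ^ (p + 1) / ((p : ℝ) + 1) ^ k
          = ∑ p ∈ range (n + 1),
              ((-1 : ℝ) ^ (n - m) * (m.factorial : ℝ) * S n m) *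
                ((S m j * e j p) * (A ^ (p + 1) / ((p : ℝ) + 1) ^ k)) := by
      intro j _
      rw [Finset.mul_sum]
      exact Finset.sum_congr rfl (fun p _ => by ring)
    rw [Finset.sum_congr rfl e1, Finset.sum_comm, Finset.mul_sum]
    refine Finset.sum_congr rfl (fun p _ => ?_)
    rw [← Finset.mul_sum, ← Finset.sum_mul, factB m hmn p]
  rw [hRHS]
  -- now handle LHS
  rw [Finset.mul_sum]
  simp_rw [Finset.mul_sum]
  rw [swap_tri]
  refine Finset.sum_congr rfl (fun m hm => ?_)
  have hmn : m ≤ n := by simp only [mem_range] at hm; omega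
  -- shrink RHS inner sum to range (m+1)
  have hshrink : (∑ i ∈ range (m + 1), (-1 : ℝ) ^ (n - m) * (m.factorial : ℝ) * S n m *
        ((-z) ^ (m - i) * (m.choose i : ℝ) * (A ^ (i + 1) / ((i : ℝ) + 1) ^ k)))
      = ∑ i ∈ range (n + 1), (-1 : ℝ) ^ (n - m) * (m.factorial : ℝ) * S n m *
        ((-z) ^ (m - i) * (m.choose i : ℝ) * (A ^ (i + 1) / ((i : ℝ) + 1) ^ k)) := by
    refine Finset.sum_subset ?_ ?_
    · intro x hx
      simp only [mem_range] at hx ⊢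
      omega
    · intro p hp hp2
      simp only [mem_range] at hp hp2
      have : m.choose p = 0 := Nat.choose_eq_zero_of_lt (by omega)
      simp [this]
  rw [← hshrink]
  -- reflect LHS inner sum
  rw [← Finset.sum_range_reflect (fun j => (-1 : ℝ) ^ n *
      ((-1 : ℝ) ^ m * (m.factorial : ℝ) * (m.choose j : ℝ) * S n m *
        A ^ (m - j + 1) / (((m - j : ℕ) : ℝ) + 1) ^ k * (-z) ^ j)) (m + 1)]
  refine Finset.sum_congr rfl (fun p hp => ?_)
  simp only [mem_range] at hp
  have hpm : p ≤ m := by omega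
  have h1 : m + 1 - 1 - p = m - p := by omega
  have h2 : m - (m - p) = p := Nat.sub_sub_self hpm
  have h3 : m.choose (m - p) = m.choose p := Nat.choose_symm hpm
  simp only [h1, h2, h3, neg_one_pow_sub n m hmn]
  ring
end
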